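/- Let G be a countable discrete group, H ≤ G a subgroup, X = G/H, and let μ be a finitely supported probability measure on G. Then liminf_{n→∞} H(ν_n)/n ≥ c(G,H;μ), where ν_n is the distribution on X of the μ-random walk started at the base coset. -/

import Mathlib

open scoped ENNReal
open Filter Topology

noncomputable section

namespace PaperRD

variable {G : Type*} [Group G]

/-- The fiber summation (push-forward) `π_# f` of a real-valued function on `G`
along the projection `G → G ⧸ H` onto the space of left cosets. -/
def fiberSum (H : Subgroup G) (f : G → ℝ) (x : G ⧸ H) : ℝ :=
  ∑' g : {g : G // (QuotientGroup.mk g : G ⧸ H) = x}, f (g : G)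

/-- The `ℓ^q`-norm (valued in `ℝ≥0∞`) of a function on a type. -/
def lqNorm {X : Type*} {E : Type*} [Norm E] (q : ℝ) (ξ : X → E) : ℝ≥0∞ :=
  (∑' x : X, ENNReal.ofReal ‖ξ x‖ ^ q) ^ (1 / q)

/-- The quasi-regular convolution operator `λ_X(f)` acting on functions on `G ⧸ H`:
`(λ_X(f)ξ)(x) = ∑_{g ∈ G} f(g) ξ(g⁻¹ x)`. -/
def lam (H : Subgroup G) (f : G → ℂ) (ξ : G ⧸ H → ℂ) (x : G ⧸ H) : ℂ :=
  ∑' g : G, f g * ξ ((g⁻¹ : G) • x)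

/-- Operator norm (in `ℝ≥0∞`) of a map on functions, with respect to the `ℓ^q` norms:
the supremum of `‖Tξ‖_q` over the unit ball. -/
def opNorm {X : Type*} (q : ℝ) (T : (X → ℂ) → (X → ℂ)) : ℝ≥0∞ :=
  ⨆ ξ : {ξ : X → ℂ // lqNorm q ξ ≤ 1}, lqNorm q (T (ξ : X → ℂ))

/-- The spectral radius `r_q(μ) = lim_n ‖T_q^n‖^{1/n}`; since the sequence of norms is
submultiplicative the limit exists and equals `inf_n ‖T_q^n‖^{1/n}`, which we take as
the definition. -/
def specRad (H : Subgroup G) (μ : G → ℝ) (q : ℝ) : ℝ :=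
  (⨅ n : ℕ, opNorm q ((lam H (fun g => (μ g : ℂ)))^[n + 1]) ^ (1 / (n + 1 : ℝ))).toReal

/-- `c(G,H;μ) = sup_{p ∈ [2,∞)} ( -p · log r_{p/(p-1)}(μ) )`. -/
def cval (H : Subgroup G) (μ : G → ℝ) : ℝ :=
  sSup {y : ℝ | ∃ p : ℝ, 2 ≤ p ∧ y = -p * Real.log (specRad H μ (p / (p - 1)))}

/-- Convolution of real functions on `G`. -/
def conv (f φ : G → ℝ) (g : G) : ℝ :=
  ∑' y : G, f y * φ (y⁻¹ * g)

open scoped Classical in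
/-- Convolution powers `μ^{*n}` (with `μ^{*0} = δ_e`). -/
def convPow (μ : G → ℝ) : ℕ → G → ℝ
  | 0 => fun g => if g = 1 then 1 else 0
  | n + 1 => conv μ (convPow μ n)

/-- `ν_n = π_#(μ^{*n}) = μ^{*n} * δ_{eH}`, the distribution at time `n` of the
`μ`-random walk on `G ⧸ H` started at the base coset. -/
def walkDist (H : Subgroup G) (μ : G → ℝ) (n : ℕ) : G ⧸ H → ℝ :=
  fiberSum H (convPow μ n)

/-- Shannon entropy `H(ν) = -∑ ν log ν` (with the convention `0 log 0 = 0`,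
automatic since `Real.log 0 = 0`). -/
def shannon {X : Type*} (ν : X → ℝ) : ℝ :=
  -∑' x : X, ν x * Real.log (ν x)

/-- Rényi entropy of order `α`: `H_α(ν) = (1/(1-α)) log ∑ ν(x)^α`. -/
def renyi {X : Type*} (α : ℝ) (ν : X → ℝ) : ℝ :=
  (1 / (1 - α)) * Real.log (∑' x : X, ν x ^ α)

/-- Word length with respect to a generating set `S`. -/
def wordLength (S : Set G) (g : G) : ℕ :=
  sInf {n : ℕ | ∃ l : List G, (∀ s ∈ l, s ∈ S) ∧ l.length = n ∧ l.prod = g}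

/-- The mixed `(2,1)`-norm of a function on `G` relative to the pair `(G,H)`:
`‖f‖_{(2,1)} = ( ∑_{x ∈ G/H} ( ∑_{g ∈ x} |f(g)| )² )^{1/2}`. -/
def norm21 (H : Subgroup G) (f : G → ℂ) : ℝ :=
  Real.sqrt (∑' x : G ⧸ H,
    (∑' g : {g : G // (QuotientGroup.mk g : G ⧸ H) = x}, ‖f (g : G)‖) ^ 2)

/-- Convolution of complex functions on `G`. -/
def convC (f φ : G → ℂ) (g : G) : ℂ :=
  ∑' y : G, f y * φ (y⁻¹ * g)

/-- The Haagerup-type norm `‖f‖_h` for the pair `(G,H)`: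
the supremum of `‖f ∗ φ‖_{(2,1)}` over finitely supported nonnegative `φ` with
`‖φ‖_{(2,1)} ≤ 1`. -/
def hNorm (H : Subgroup G) (f : G → ℂ) : ℝ :=
  sSup {r : ℝ | ∃ φ : G → ℝ, (Function.support φ).Finite ∧ (∀ y, 0 ≤ φ y) ∧
    norm21 H (fun g => (φ g : ℂ)) ≤ 1 ∧
    r = norm21 H (convC f (fun g => (φ g : ℂ)))}

/-- The pair `(G,H)` has pair rapid decay w.r.t. the length `ℓ`, with exponent `s`. -/
def HasPairRDWith (H : Subgroup G) (ℓ : G → ℕ) (s : ℝ) : Prop :=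
  ∃ C : ℝ, 0 < C ∧ ∀ f : G → ℂ, (Function.support f).Finite →
    hNorm H f ≤ C * norm21 H (fun g => f g * (((1 + (ℓ g : ℝ)) ^ s : ℝ) : ℂ))

/-- The pair `(G,H)` has pair rapid decay w.r.t. the length `ℓ`. -/
def HasPairRD (H : Subgroup G) (ℓ : G → ℕ) : Prop :=
  ∃ s : ℝ, 0 < s ∧ HasPairRDWith H ℓ s

/-- Radial majorant `W(t) = sup { w(g) : ℓ(g) ≤ t }` of a weight `w`. -/
def radialMaj (ℓ : G → ℕ) (w : G → ℝ) (t : ℕ) : ℝ :=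
  sSup (w '' {g : G | ℓ g ≤ t})

/-- The pair `(G,H)` satisfies subexponential Lorentz control (`SLC_subexp`)
w.r.t. the length `ℓ`: there is a weight `w ≥ 1` with `‖f‖_h ≤ C ‖f·w‖_{(2,1)}`
for all finitely supported `f`, whose radial majorant `W` satisfies
`log W(t) / t → 0`. -/
def SLCsubexp (H : Subgroup G) (ℓ : G → ℕ) : Prop :=
  ∃ C : ℝ, 0 < C ∧ ∃ w : G → ℝ, (∀ g, 1 ≤ w g) ∧
    (∀ f : G → ℂ, (Function.support f).Finite →
      hNorm H f ≤ C * norm21 H (fun g => f g * (w g : ℂ))) ∧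
    Tendsto (fun t : ℕ => Real.log (radialMaj ℓ w t) / (t : ℝ)) atTop (𝓝 0)

open scoped Pointwise

section Comb

attribute [local instance] Classical.propDecidable

variable {μ : G → ℝ} {s : Finset G}

lemma conv_eq_sum (hs : ∀ g ∉ s, μ g = 0) (φ : G → ℝ) (g : G) :
    conv μ φ g = ∑ y ∈ s, μ y * φ (y⁻¹ * g) :=
  tsum_eq_sum (fun y hy => by rw [hs y hy, zero_mul])

lemma shift_sum (t : Finset G) {y : G} (hy : y ∈ s) (Ψ : G → ℝ)
    (h0 : ∀ g, Ψ g ≠ 0 → y⁻¹ * g ∈ t) :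
    ∑ g ∈ s * t, Ψ g = ∑ h ∈ t, Ψ (y * h) := by
  have hmap : ∑ h ∈ t, Ψ (y * h) = ∑ g ∈ t.map (mulLeftEmbedding y), Ψ g := by
    rw [Finset.sum_map]
    simp [mulLeftEmbedding]
  rw [hmap]
  refine (Finset.sum_subset ?_ ?_).symm
  · intro g hg
    rcases Finset.mem_map.1 hg with ⟨h, hh, rfl⟩
    exact Finset.mul_mem_mul hy hh
  · intro g _ hg
    by_contra hne
    exact hg (Finset.mem_map.2 ⟨y⁻¹ * g, h0 g hne, by simp [mulLeftEmbedding]⟩)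

lemma conv_supp (hs : ∀ g ∉ s, μ g = 0) (φ : G → ℝ) (t : Finset G) (ht : ∀ g ∉ t, φ g = 0) :
    ∀ g ∉ s * t, conv μ φ g = 0 := by
  intro g hg
  rw [conv_eq_sum hs]
  refine Finset.sum_eq_zero fun y hy => ?_
  rcases eq_or_ne (φ (y⁻¹ * g)) 0 with h | h
  · rw [h, mul_zero]
  · exact absurd (by simpa using Finset.mul_mem_mul hy (by_contra fun hc => h (ht _ hc))) hg

lemma conv_sum_one (hs : ∀ g ∉ s, μ g = 0) (hμs : ∑ y ∈ s, μ y = 1) (φ : G → ℝ) (t : Finset G)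
    (ht : ∀ g ∉ t, φ g = 0) (hφs : ∑ h ∈ t, φ h = 1) :
    ∑ g ∈ s * t, conv μ φ g = 1 := by
  have : ∑ g ∈ s * t, conv μ φ g = ∑ g ∈ s * t, ∑ y ∈ s, μ y * φ (y⁻¹ * g) :=
    Finset.sum_congr rfl fun g _ => conv_eq_sum hs φ g
  rw [this, Finset.sum_comm]
  have : ∀ y ∈ s, ∑ g ∈ s * t, μ y * φ (y⁻¹ * g) = 1 * μ y := by
    intro y hy
    rw [shift_sum t hy (fun g => μ y * φ (y⁻¹ * g))
      (fun g h => by by_contra hc; exact h (by simp [ht _ hc]))]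
    simp only [inv_mul_cancel_left]
    rw [← Finset.mul_sum, hφs, mul_one, one_mul]
  rw [Finset.sum_congr rfl this]
  simp [hμs]

/-- Support finsets for the convolution powers. -/
def tpow (s : Finset G) : ℕ → Finset G
  | 0 => {1}
  | n + 1 => s * tpow s n

lemma convPow_nonneg (hμ0 : ∀ g, 0 ≤ μ g) : ∀ n g, 0 ≤ convPow μ n g := by
  intro n
  induction n with
  | zero => intro g; simp only [convPow]; split <;> norm_num
  | succ n ih =>
    intro g
    exact tsum_nonneg fun y => mul_nonneg (hμ0 y) (ih _)

lemma convPow_supp (hs : ∀ g ∉ s, μ g = 0) : ∀ n, ∀ g ∉ tpow s n, convPow μ n g = 0 := by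
  intro n
  induction n with
  | zero => intro g hg; simp only [tpow, Finset.mem_singleton] at hg; simp [convPow, hg]
  | succ n ih => exact fun g hg => conv_supp hs _ _ ih g hg

lemma convPow_sum_one (hs : ∀ g ∉ s, μ g = 0) (hμs : ∑ y ∈ s, μ y = 1) :
    ∀ n, ∑ g ∈ tpow s n, convPow μ n g = 1 := by
  intro n
  induction n with
  | zero => rw [tpow, Finset.sum_singleton]; simp [convPow]
  | succ n ih => exact conv_sum_one hs hμs _ _ (convPow_supp hs n) ih


lemma fiberSum_eq_sum (H : Subgroup G) (f : G → ℝ) (t : Finset G)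
    (ht : ∀ g ∉ t, f g = 0) (x : G ⧸ H) :
    fiberSum H f x = ∑ g ∈ t, if (QuotientGroup.mk g : G ⧸ H) = x then f g else 0 := by
  have h1 : fiberSum H f x = ∑' g : G, Set.indicator {g : G | (QuotientGroup.mk g : G ⧸ H) = x} f g :=
    tsum_subtype {g : G | (QuotientGroup.mk g : G ⧸ H) = x} f
  rw [h1, tsum_eq_sum (s := t) (fun g hg => by
    simp [Set.indicator_apply, ht g hg])]
  refine Finset.sum_congr rfl fun g _ => ?_
  simp [Set.indicator_apply]

lemma fiberSum_nonneg (H : Subgroup G) (f : G → ℝ) (hf : ∀ g, 0 ≤ f g) (x : G ⧸ H) :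
    0 ≤ fiberSum H f x :=
  tsum_nonneg fun g => hf g

variable (H : Subgroup G)

lemma walk_nonneg (hμ0 : ∀ g, 0 ≤ μ g) (n : ℕ) (x : G ⧸ H) :
    0 ≤ walkDist H μ n x :=
  fiberSum_nonneg H _ (convPow_nonneg hμ0 n) x

lemma walk_eq (hs : ∀ g ∉ s, μ g = 0) (n : ℕ) (x : G ⧸ H) :
    walkDist H μ n x
      = ∑ g ∈ tpow s n, if (QuotientGroup.mk g : G ⧸ H) = x then convPow μ n g else 0 :=
  fiberSum_eq_sum H _ _ (convPow_supp hs n) x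

lemma walk_eq' (hs : ∀ g ∉ s, μ g = 0) (n : ℕ) (t : Finset G) (htsub : tpow s n ⊆ t) (x : G ⧸ H) :
    walkDist H μ n x
      = ∑ g ∈ t, if (QuotientGroup.mk g : G ⧸ H) = x then convPow μ n g else 0 :=
  fiberSum_eq_sum H _ _ (fun g hg => convPow_supp hs n g (fun hc => hg (htsub hc))) x

lemma walk_supp (hs : ∀ g ∉ s, μ g = 0) (n : ℕ) (x : G ⧸ H)
    (hx : x ∉ (tpow s n).image (fun g => (QuotientGroup.mk g : G ⧸ H))) :
    walkDist H μ n x = 0 := by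
  rw [walk_eq H hs n x]
  refine Finset.sum_eq_zero fun g hg => ?_
  have : (QuotientGroup.mk g : G ⧸ H) ≠ x := by
    intro h
    exact hx (Finset.mem_image.2 ⟨g, hg, h⟩)
  simp [this]

lemma walk_sum_one (hs : ∀ g ∉ s, μ g = 0) (hμs : ∑ y ∈ s, μ y = 1) (n : ℕ) :
    ∑ x ∈ (tpow s n).image (fun g => (QuotientGroup.mk g : G ⧸ H)),
      walkDist H μ n x = 1 := by
  rw [Finset.sum_congr rfl (fun x _ => walk_eq H hs n x), Finset.sum_comm]
  rw [Finset.sum_congr rfl (fun g hg => Finset.sum_ite_eq _ (QuotientGroup.mk g)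
    (fun _ => convPow μ n g))]
  rw [Finset.sum_congr rfl (fun g hg => if_pos (Finset.mem_image_of_mem _ hg))]
  exact convPow_sum_one hs hμs n

lemma walk_hasSum (hs : ∀ g ∉ s, μ g = 0) (hμs : ∑ y ∈ s, μ y = 1) (n : ℕ) :
    HasSum (walkDist H μ n) 1 := by
  have h := hasSum_sum_of_ne_finset_zero
    (s := (tpow s n).image (fun g => (QuotientGroup.mk g : G ⧸ H)))
    (f := walkDist H μ n) (L := SummationFilter.unconditional _) (fun x hx => walk_supp H hs n x hx)
  rwa [walk_sum_one H hs hμs n] at h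

lemma walk_le_one (hs : ∀ g ∉ s, μ g = 0) (hμ0 : ∀ g, 0 ≤ μ g) (hμs : ∑ y ∈ s, μ y = 1)
    (n : ℕ) (x : G ⧸ H) : walkDist H μ n x ≤ 1 :=
  le_hasSum (walk_hasSum H hs hμs n) x (fun y _ => walk_nonneg H hμ0 n y)

lemma walk_supp_finite (hs : ∀ g ∉ s, μ g = 0) (n : ℕ) :
    (Function.support (walkDist H μ n)).Finite := by
  refine Set.Finite.subset ((tpow s n).image
    (fun g => (QuotientGroup.mk g : G ⧸ H))).finite_toSet ?_
  intro x hx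
  by_contra hc
  exact hx (walk_supp H hs n x (by simpa using hc))

lemma walk_step (hs : ∀ g ∉ s, μ g = 0) (n : ℕ) (x : G ⧸ H) :
    ∑ g ∈ s, μ g * walkDist H μ n ((g⁻¹ : G) • x) = walkDist H μ (n + 1) x := by
  have lhs : ∀ g : G, walkDist H μ n ((g⁻¹ : G) • x)
      = ∑ h ∈ tpow s n, if (QuotientGroup.mk (g * h) : G ⧸ H) = x then convPow μ n h else 0 := by
    intro g
    rw [walk_eq H hs n]
    refine Finset.sum_congr rfl fun h _ => ?_
    congr 1
    have : ((QuotientGroup.mk h : G ⧸ H) = (g⁻¹ : G) • x)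
        ↔ ((QuotientGroup.mk (g * h) : G ⧸ H) = x) := by
      rw [eq_comm, inv_smul_eq_iff, eq_comm]
      congr! 1
    simp only [this]
  calc ∑ g ∈ s, μ g * walkDist H μ n ((g⁻¹ : G) • x)
      = ∑ g ∈ s, ∑ h ∈ tpow s n,
          if (QuotientGroup.mk (g * h) : G ⧸ H) = x then μ g * convPow μ n h else 0 := by
        refine Finset.sum_congr rfl fun g _ => ?_
        rw [lhs g, Finset.mul_sum]
        exact Finset.sum_congr rfl fun h _ => by rw [mul_ite, mul_zero]
    _ = walkDist H μ (n + 1) x := by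
        have expand : ∀ g' ∈ tpow s (n+1), (if (QuotientGroup.mk g' : G ⧸ H) = x
            then convPow μ (n+1) g' else 0)
            = ∑ y ∈ s, if (QuotientGroup.mk g' : G ⧸ H) = x
              then μ y * convPow μ n (y⁻¹ * g') else 0 := by
          intro g' _
          have hc : convPow μ (n+1) g' = conv μ (convPow μ n) g' := rfl
          rw [hc, conv_eq_sum hs]
          split
          · rfl
          · simp
        have key : walkDist H μ (n+1) x
            = ∑ g ∈ s, ∑ h ∈ tpow s n,
                if (QuotientGroup.mk (g * h) : G ⧸ H) = x then μ g * convPow μ n h else 0 := by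
          rw [walk_eq H hs (n + 1) x, Finset.sum_congr rfl expand, Finset.sum_comm]
          refine Finset.sum_congr rfl fun y hy => ?_
          have hshift := shift_sum (s := s) (tpow s n) hy
            (fun g' => if (QuotientGroup.mk g' : G ⧸ H) = x
              then μ y * convPow μ n (y⁻¹ * g') else 0)
            (fun g' hne => by
              by_contra hc
              refine hne ?_
              simp [convPow_supp hs n _ hc])
          rw [show tpow s (n+1) = s * tpow s n from rfl, hshift]
          refine Finset.sum_congr rfl fun h _ => ?_
          simp only [inv_mul_cancel_left]
        exact key.symm

end Comb

section Mink

variable {X : Type*} {q : ℝ}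

lemma lp_tsum_add (hq : 1 ≤ q) (f g : X → ℝ≥0∞) :
    (∑' x, (f x + g x) ^ q) ^ (1/q) ≤ (∑' x, f x ^ q) ^ (1/q) + (∑' x, g x ^ q) ^ (1/q) := by
  have hq0 : 0 < q := lt_of_lt_of_le zero_lt_one hq
  set R := (∑' x, f x ^ q) ^ (1/q) + (∑' x, g x ^ q) ^ (1/q) with hR
  rcases eq_or_ne R ⊤ with h | h
  · rw [h]; exact le_top
  have key : ∑' x, (f x + g x) ^ q ≤ R ^ q := by
    rw [ENNReal.tsum_eq_iSup_sum]
    refine iSup_le fun A => ?_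
    have h1 : (∑ x ∈ A, (f x + g x) ^ q) ^ (1/q) ≤ R := by
      refine le_trans (ENNReal.Lp_add_le A f g hq) ?_
      rw [hR]
      gcongr <;> exact ENNReal.sum_le_tsum A
    calc ∑ x ∈ A, (f x + g x) ^ q
        = ((∑ x ∈ A, (f x + g x) ^ q) ^ (1/q)) ^ q := by
          rw [← ENNReal.rpow_mul, one_div, inv_mul_cancel₀ hq0.ne', ENNReal.rpow_one]
      _ ≤ R ^ q := ENNReal.rpow_le_rpow h1 hq0.le
  calc (∑' x, (f x + g x) ^ q) ^ (1/q) ≤ (R ^ q) ^ (1/q) :=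
        ENNReal.rpow_le_rpow key (by positivity)
    _ = R := by rw [← ENNReal.rpow_mul, mul_one_div, div_self hq0.ne', ENNReal.rpow_one]

lemma lp_tsum_finset_sum {ι : Type*} (hq : 1 ≤ q) (t : Finset ι) (F : ι → X → ℝ≥0∞) :
    (∑' x, (∑ i ∈ t, F i x) ^ q) ^ (1/q) ≤ ∑ i ∈ t, (∑' x, F i x ^ q) ^ (1/q) := by
  have hq0 : 0 < q := lt_of_lt_of_le zero_lt_one hq
  induction t using Finset.cons_induction_on with
  | empty =>
    simp only [Finset.sum_empty, ENNReal.zero_rpow_of_pos hq0, tsum_zero,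
      ENNReal.zero_rpow_of_pos (show (0:ℝ) < 1/q by positivity), Finset.sum_empty, le_refl]
  | cons _ _ hnot ih =>
    simp only [Finset.sum_cons]
    exact le_trans (lp_tsum_add hq _ _) (by gcongr)

end Mink

section Analytic

variable (H : Subgroup G) {μ : G → ℝ} {s : Finset G} {q : ℝ}

/-- The complex-valued walk distribution. -/
def nuC (H : Subgroup G) (μ : G → ℝ) (n : ℕ) : G ⧸ H → ℂ :=
  fun x => ((walkDist H μ n x : ℝ) : ℂ)

lemma lam_eq_sum (hs : ∀ g ∉ s, μ g = 0) (ξ : G ⧸ H → ℂ) (x : G ⧸ H) :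
    lam H (fun g => (μ g : ℂ)) ξ x = ∑ g ∈ s, (μ g : ℂ) * ξ ((g⁻¹ : G) • x) :=
  tsum_eq_sum (fun g hg => by simp [hs g hg])

lemma lam_step (hs : ∀ g ∉ s, μ g = 0) (n : ℕ) :
    lam H (fun g => (μ g : ℂ)) (nuC H μ n) = nuC H μ (n + 1) := by
  funext x
  rw [lam_eq_sum H hs]
  have : ∀ g ∈ s, (μ g : ℂ) * (nuC H μ n) ((g⁻¹ : G) • x)
      = ((μ g * walkDist H μ n ((g⁻¹ : G) • x) : ℝ) : ℂ) := by
    intro g _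
    simp [nuC]
  rw [Finset.sum_congr rfl this, ← Complex.ofReal_sum, walk_step H hs n x]
  rfl

lemma lam_iter (hs : ∀ g ∉ s, μ g = 0) (n : ℕ) :
    (lam H (fun g => (μ g : ℂ)))^[n] (nuC H μ 0) = nuC H μ n := by
  induction n with
  | zero => rfl
  | succ n ih => rw [Function.iterate_succ_apply', ih, lam_step H hs]

lemma tsum_translate (h : G ⧸ H → ℝ≥0∞) (g : G) :
    ∑' x : G ⧸ H, h ((g⁻¹ : G) • x) = ∑' x : G ⧸ H, h x :=
  Equiv.tsum_eq (MulAction.toPerm (g⁻¹ : G)) h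

lemma lam_contract (hq : 1 ≤ q) (hs : ∀ g ∉ s, μ g = 0) (hμ0 : ∀ g, 0 ≤ μ g)
    (hμs : ∑ y ∈ s, μ y = 1) (ξ : G ⧸ H → ℂ) :
    lqNorm q (lam H (fun g => (μ g : ℂ)) ξ) ≤ lqNorm q ξ := by
  have hq0 : 0 < q := lt_of_lt_of_le zero_lt_one hq
  have pointwise : ∀ x : G ⧸ H, ENNReal.ofReal ‖lam H (fun g => (μ g : ℂ)) ξ x‖
      ≤ ∑ g ∈ s, ENNReal.ofReal (μ g * ‖ξ ((g⁻¹ : G) • x)‖) := by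
    intro x
    rw [lam_eq_sum H hs, ← ENNReal.ofReal_sum_of_nonneg
      (fun g _ => mul_nonneg (hμ0 g) (norm_nonneg _))]
    refine ENNReal.ofReal_le_ofReal ?_
    refine le_trans (norm_sum_le _ _) (le_of_eq (Finset.sum_congr rfl fun g _ => ?_))
    rw [norm_mul, Complex.norm_real, Real.norm_eq_abs, abs_of_nonneg (hμ0 g)]
  calc lqNorm q (lam H (fun g => (μ g : ℂ)) ξ)
      ≤ (∑' x : G ⧸ H, (∑ g ∈ s, ENNReal.ofReal (μ g * ‖ξ ((g⁻¹ : G) • x)‖)) ^ q) ^ (1/q) := by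
        unfold lqNorm
        refine ENNReal.rpow_le_rpow ?_ (by positivity)
        exact ENNReal.tsum_le_tsum fun x => ENNReal.rpow_le_rpow (pointwise x) hq0.le
    _ ≤ ∑ g ∈ s, (∑' x : G ⧸ H, ENNReal.ofReal (μ g * ‖ξ ((g⁻¹ : G) • x)‖) ^ q) ^ (1/q) :=
        lp_tsum_finset_sum hq s _
    _ = ∑ g ∈ s, ENNReal.ofReal (μ g) * lqNorm q ξ := by
        refine Finset.sum_congr rfl fun g _ => ?_
        have e1 : ∀ x : G ⧸ H, ENNReal.ofReal (μ g * ‖ξ ((g⁻¹ : G) • x)‖) ^ q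
            = ENNReal.ofReal (μ g) ^ q * ENNReal.ofReal ‖ξ ((g⁻¹ : G) • x)‖ ^ q := by
          intro x
          rw [ENNReal.ofReal_mul (hμ0 g), ENNReal.mul_rpow_of_nonneg _ _ hq0.le]
        simp only [e1]
        rw [ENNReal.tsum_mul_left, ENNReal.mul_rpow_of_nonneg _ _ (by positivity : (0:ℝ) ≤ 1/q),
          ← ENNReal.rpow_mul, mul_one_div, div_self hq0.ne', ENNReal.rpow_one,
          tsum_translate H (fun x => ENNReal.ofReal ‖ξ x‖ ^ q) g]
        rfl
    _ = lqNorm q ξ := by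
        rw [← Finset.sum_mul, ← ENNReal.ofReal_sum_of_nonneg (fun g _ => hμ0 g), hμs,
          ENNReal.ofReal_one, one_mul]

end Analytic



section Op

variable (H : Subgroup G) {μ : G → ℝ} {s : Finset G} {q : ℝ}

lemma lqNorm_zero {X : Type*} (hq0 : 0 < q) : lqNorm q (0 : X → ℂ) = 0 := by
  have h1 : ∀ x : X, ENNReal.ofReal ‖(0 : X → ℂ) x‖ ^ q = 0 := fun x => by
    rw [Pi.zero_apply, norm_zero, ENNReal.ofReal_zero, ENNReal.zero_rpow_of_pos hq0]
  rw [lqNorm, tsum_congr h1, tsum_zero,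
    ENNReal.zero_rpow_of_pos (show (0:ℝ) < 1/q by positivity)]

lemma eq_zero_of_lqNorm {X : Type*} (hq0 : 0 < q) (ξ : X → ℂ) (h : lqNorm q ξ = 0) :
    ξ = 0 := by
  unfold lqNorm at h
  rw [ENNReal.rpow_eq_zero_iff] at h
  have hq1 : (0:ℝ) < 1/q := by positivity
  have hts : ∑' x, ENNReal.ofReal ‖ξ x‖ ^ q = 0 := by
    rcases h with ⟨h0, _⟩ | ⟨_, hlt⟩
    · exact h0
    · exfalso
      linarith
  funext x
  have hx := (ENNReal.tsum_eq_zero.1 hts) x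
  rw [ENNReal.rpow_eq_zero_iff] at hx
  rcases hx with ⟨h0, _⟩ | ⟨h0, hlt⟩
  · have : ‖ξ x‖ ≤ 0 := by simpa [ENNReal.ofReal_eq_zero] using h0
    simpa using norm_le_zero_iff.1 this
  · exact absurd h0 (by simp)

lemma lam_zero (f : G → ℂ) : lam H f 0 = 0 := by
  funext x
  simp [lam]

lemma lam_smul (f : G → ℂ) (c : ℂ) (ξ : G ⧸ H → ℂ) :
    lam H f (c • ξ) = c • lam H f ξ := by
  funext x
  simp only [lam, Pi.smul_apply, smul_eq_mul]
  rw [← tsum_mul_left]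
  congr 1
  funext g
  ring

lemma lam_iter_zero (f : G → ℂ) (m : ℕ) : (lam H f)^[m] 0 = 0 := by
  induction m with
  | zero => rfl
  | succ m ih => rw [Function.iterate_succ_apply', ih, lam_zero]

lemma lam_iter_smul (f : G → ℂ) (c : ℂ) (ξ : G ⧸ H → ℂ) (m : ℕ) :
    (lam H f)^[m] (c • ξ) = c • (lam H f)^[m] ξ := by
  induction m with
  | zero => rfl
  | succ m ih =>
    simp only [Function.iterate_succ_apply']
    rw [ih, lam_smul]

lemma lqNorm_smul {X : Type*} (hq0 : 0 < q) (c : ℂ) (ξ : X → ℂ) :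
    lqNorm q (c • ξ) = ENNReal.ofReal ‖c‖ * lqNorm q ξ := by
  unfold lqNorm
  have e1 : ∀ x : X, ENNReal.ofReal ‖(c • ξ) x‖ ^ q
      = ENNReal.ofReal ‖c‖ ^ q * ENNReal.ofReal ‖ξ x‖ ^ q := by
    intro x
    rw [Pi.smul_apply, norm_smul, ENNReal.ofReal_mul (norm_nonneg c),
      ENNReal.mul_rpow_of_nonneg _ _ hq0.le]
  simp only [e1]
  rw [ENNReal.tsum_mul_left, ENNReal.mul_rpow_of_nonneg _ _ (show (0:ℝ) ≤ 1/q by positivity),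
    ← ENNReal.rpow_mul, mul_one_div, div_self hq0.ne', ENNReal.rpow_one]

lemma le_opNorm {X : Type*} (T : (X → ℂ) → (X → ℂ)) (ξ : X → ℂ) (hξ : lqNorm q ξ ≤ 1) :
    lqNorm q (T ξ) ≤ opNorm q T :=
  le_iSup (fun p : {ξ : X → ℂ // lqNorm q ξ ≤ 1} => lqNorm q (T (p : X → ℂ))) ⟨ξ, hξ⟩

variable (hq : 1 ≤ q) (hs : ∀ g ∉ s, μ g = 0) (hμ0 : ∀ g, 0 ≤ μ g) (hμs : ∑ y ∈ s, μ y = 1)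

include hq hs hμ0 hμs

lemma iter_contract (m : ℕ) (ξ : G ⧸ H → ℂ) :
    lqNorm q ((lam H (fun g => (μ g : ℂ)))^[m] ξ) ≤ lqNorm q ξ := by
  induction m with
  | zero => exact le_rfl
  | succ m ih =>
    rw [Function.iterate_succ_apply']
    exact le_trans (lam_contract H hq hs hμ0 hμs _) ih

lemma opNorm_iter_le_one (m : ℕ) :
    opNorm q ((lam H (fun g => (μ g : ℂ)))^[m]) ≤ 1 :=
  iSup_le fun p => le_trans (iter_contract H hq hs hμ0 hμs m p) p.2

lemma lqNorm_iter_le (m : ℕ) (η : G ⧸ H → ℂ) (hη : lqNorm q η ≠ ⊤) :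
    lqNorm q ((lam H (fun g => (μ g : ℂ)))^[m] η)
      ≤ opNorm q ((lam H (fun g => (μ g : ℂ)))^[m]) * lqNorm q η := by
  have hq0 : 0 < q := lt_of_lt_of_le zero_lt_one hq
  rcases eq_or_ne (lqNorm q η) 0 with h0 | h0
  · rw [eq_zero_of_lqNorm hq0 η h0, lam_iter_zero, lqNorm_zero hq0]
    exact zero_le
  · set c : ℝ := (lqNorm q η).toReal with hc
    have hcpos : 0 < c := ENNReal.toReal_pos h0 hη
    have hofc : ENNReal.ofReal c = lqNorm q η := ENNReal.ofReal_toReal hη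
    set ξ : G ⧸ H → ℂ := ((c⁻¹ : ℝ) : ℂ) • η with hξdef
    have hξnorm : lqNorm q ξ = 1 := by
      rw [hξdef, lqNorm_smul hq0]
      rw [Complex.norm_real, Real.norm_eq_abs, abs_of_nonneg (by positivity), ← hofc,
        ← ENNReal.ofReal_mul (by positivity), inv_mul_cancel₀ hcpos.ne', ENNReal.ofReal_one]
    have hη' : η = ((c : ℝ) : ℂ) • ξ := by
      rw [hξdef, smul_smul, ← Complex.ofReal_mul, mul_inv_cancel₀ hcpos.ne',
        Complex.ofReal_one, one_smul]
    rw [hη', lam_iter_smul, lqNorm_smul hq0]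
    rw [Complex.norm_real, Real.norm_eq_abs, abs_of_nonneg hcpos.le]
    calc ENNReal.ofReal c * lqNorm q ((lam H (fun g => (μ g : ℂ)))^[m] ξ)
        ≤ ENNReal.ofReal c * opNorm q ((lam H (fun g => (μ g : ℂ)))^[m]) :=
          mul_le_mul_right (le_opNorm _ ξ hξnorm.le) _
      _ = opNorm q ((lam H (fun g => (μ g : ℂ)))^[m]) * lqNorm q η := by
          rw [hofc, mul_comm]
      _ ≤ _ := by
          rw [hη', lqNorm_smul hq0, Complex.norm_real, Real.norm_eq_abs,
            abs_of_nonneg hcpos.le, hξnorm, mul_one]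

lemma opNorm_submul (m n : ℕ) :
    opNorm q ((lam H (fun g => (μ g : ℂ)))^[m + n])
      ≤ opNorm q ((lam H (fun g => (μ g : ℂ)))^[m])
        * opNorm q ((lam H (fun g => (μ g : ℂ)))^[n]) := by
  refine iSup_le fun p => ?_
  rw [Function.iterate_add_apply]
  have hη : lqNorm q ((lam H (fun g => (μ g : ℂ)))^[n] (p : G ⧸ H → ℂ))
      ≤ opNorm q ((lam H (fun g => (μ g : ℂ)))^[n]) := le_opNorm _ _ p.2
  have hηne : lqNorm q ((lam H (fun g => (μ g : ℂ)))^[n] (p : G ⧸ H → ℂ)) ≠ ⊤ :=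
    ne_top_of_le_ne_top (by simp) (le_trans hη (opNorm_iter_le_one H hq hs hμ0 hμs n))
  exact le_trans (lqNorm_iter_le H hq hs hμ0 hμs m _ hηne) (mul_le_mul_right hη _)

end Op



section Ent

attribute [local instance] Classical.propDecidable

lemma renyi_le_shannon {Xt : Type*} {q : ℝ} (hq : 1 < q) (ν : Xt → ℝ) (F : Finset Xt)
    (hnn : ∀ x, 0 ≤ ν x) (hoff : ∀ x ∉ F, ν x = 0) (hsum1 : ∑ x ∈ F, ν x = 1) :
    (1/(1-q)) * Real.log (∑ x ∈ F, ν x ^ q) ≤ shannon ν := by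
  have hq0 : 0 < q := lt_trans zero_lt_one hq
  have hsh : shannon ν = -∑ x ∈ F, ν x * Real.log (ν x) := by
    rw [shannon, tsum_eq_sum (s := F) (fun x hx => by rw [hoff x hx, zero_mul])]
  set F' := F.filter (fun x => ν x ≠ 0) with hF'
  have hsub : F' ⊆ F := Finset.filter_subset _ _
  have hpos : ∀ x ∈ F', 0 < ν x := fun x hx =>
    lt_of_le_of_ne (hnn x) (Ne.symm (Finset.mem_filter.1 hx).2)
  have hvanish : ∀ x ∈ F, x ∉ F' → ν x = 0 := fun x hxF hxF' => by
    by_contra h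
    exact hxF' (Finset.mem_filter.2 ⟨hxF, h⟩)
  have hsum1' : ∑ x ∈ F', ν x = 1 := by
    rw [Finset.sum_subset hsub hvanish, hsum1]
  have hSq : ∑ x ∈ F', ν x ^ q = ∑ x ∈ F, ν x ^ q :=
    Finset.sum_subset hsub (fun x hxF hxF' => by
      rw [hvanish x hxF hxF', Real.zero_rpow hq0.ne'])
  have hE : ∑ x ∈ F', ν x * Real.log (ν x) = ∑ x ∈ F, ν x * Real.log (ν x) :=
    Finset.sum_subset hsub (fun x hxF hxF' => by rw [hvanish x hxF hxF', zero_mul])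
  have jensen := (strictConcaveOn_log_Ioi.concaveOn).le_map_sum (t := F')
    (w := fun x => ν x) (p := fun x => ν x ^ (q-1))
    (fun x _ => hnn x) hsum1' (fun x hx => Real.rpow_pos_of_pos (hpos x hx) _)
  have hL : ∑ x ∈ F', ν x • Real.log (ν x ^ (q-1))
      = (q-1) * ∑ x ∈ F', ν x * Real.log (ν x) := by
    rw [Finset.mul_sum]
    refine Finset.sum_congr rfl fun x hx => ?_
    rw [smul_eq_mul, Real.log_rpow (hpos x hx)]
    ring
  have hR : ∑ x ∈ F', ν x • ν x ^ (q-1) = ∑ x ∈ F, ν x ^ q := by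
    rw [← hSq]
    refine Finset.sum_congr rfl fun x hx => ?_
    rw [smul_eq_mul]
    calc ν x * ν x ^ (q-1) = ν x ^ (1:ℝ) * ν x ^ (q-1) := by rw [Real.rpow_one]
      _ = ν x ^ (1 + (q-1)) := (Real.rpow_add (hpos x hx) _ _).symm
      _ = ν x ^ q := by norm_num
  rw [hL, hR] at jensen
  have hneg : (1/(1-q)) ≤ 0 := by
    apply div_nonpos_of_nonneg_of_nonpos <;> linarith
  have := mul_le_mul_of_nonpos_left jensen hneg
  have hcoef : (1/(1-q)) * ((q-1) * ∑ x ∈ F', ν x * Real.log (ν x))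
      = -∑ x ∈ F, ν x * Real.log (ν x) := by
    rw [← hE, ← mul_assoc]
    have : (1/(1-q)) * (q-1) = -1 := by
      rw [div_mul_eq_mul_div, one_mul, div_eq_iff (by linarith : (1:ℝ)-q ≠ 0)]
      ring
    rw [this]
    ring
  rw [hcoef] at this
  rw [hsh]
  exact this

end Ent

section Chain

attribute [local instance] Classical.propDecidable

variable (H : Subgroup G) {μ : G → ℝ} {s : Finset G} {q : ℝ}

lemma lqNorm_nuC_eq (hq0 : 0 < q) (hs : ∀ g ∉ s, μ g = 0) (hμ0 : ∀ g, 0 ≤ μ g) (n : ℕ) :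
    lqNorm q (nuC H μ n)
      = ENNReal.ofReal (∑ x ∈ (tpow s n).image (fun g => (QuotientGroup.mk g : G ⧸ H)),
          walkDist H μ n x ^ q) ^ (1/q) := by
  rw [lqNorm, tsum_eq_sum
    (s := (tpow s n).image (fun g => (QuotientGroup.mk g : G ⧸ H)))
    (fun x hx => by
      rw [show nuC H μ n x = 0 by rw [nuC, walk_supp H hs n x hx, Complex.ofReal_zero]]
      rw [norm_zero, ENNReal.ofReal_zero, ENNReal.zero_rpow_of_pos hq0])]
  congr 1
  rw [ENNReal.ofReal_sum_of_nonneg (fun x _ => Real.rpow_nonneg (walk_nonneg H hμ0 n x) q)]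
  refine Finset.sum_congr rfl fun x _ => ?_
  rw [nuC, Complex.norm_real, Real.norm_eq_abs, abs_of_nonneg (walk_nonneg H hμ0 n x),
    ENNReal.ofReal_rpow_of_nonneg (walk_nonneg H hμ0 n x) hq0.le]

lemma Sq_pos (hs : ∀ g ∉ s, μ g = 0) (hμ0 : ∀ g, 0 ≤ μ g) (hμs : ∑ y ∈ s, μ y = 1) (n : ℕ) :
    0 < ∑ x ∈ (tpow s n).image (fun g => (QuotientGroup.mk g : G ⧸ H)),
        walkDist H μ n x ^ q := by
  obtain ⟨x, hxmem, hx⟩ : ∃ x ∈ (tpow s n).image (fun g => (QuotientGroup.mk g : G ⧸ H)),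
      0 < walkDist H μ n x := by
    by_contra hc
    push_neg at hc
    have : ∑ x ∈ (tpow s n).image (fun g => (QuotientGroup.mk g : G ⧸ H)),
        walkDist H μ n x ≤ 0 :=
      Finset.sum_nonpos fun x hx => hc x hx
    rw [walk_sum_one H hs hμs n] at this
    linarith
  refine Finset.sum_pos' (fun y _ => Real.rpow_nonneg (walk_nonneg H hμ0 n y) q) ?_
  exact ⟨x, hxmem, Real.rpow_pos_of_pos hx q⟩

lemma Sq_le_one (hq : 1 ≤ q) (hs : ∀ g ∉ s, μ g = 0) (hμ0 : ∀ g, 0 ≤ μ g)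
    (hμs : ∑ y ∈ s, μ y = 1) (n : ℕ) :
    ∑ x ∈ (tpow s n).image (fun g => (QuotientGroup.mk g : G ⧸ H)),
        walkDist H μ n x ^ q ≤ 1 := by
  have hq0 : 0 < q := lt_of_lt_of_le zero_lt_one hq
  rw [← walk_sum_one H hs hμs n]
  refine Finset.sum_le_sum fun x _ => ?_
  rcases eq_or_lt_of_le (walk_nonneg H hμ0 n x) with h | h
  · rw [← h, Real.zero_rpow hq0.ne']
  · calc walkDist H μ n x ^ q ≤ walkDist H μ n x ^ (1:ℝ) :=
        Real.rpow_le_rpow_of_exponent_ge h (walk_le_one H hs hμ0 hμs n x) hq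
      _ = walkDist H μ n x := Real.rpow_one _

lemma lqNorm_nuC_le_one (hq : 1 ≤ q) (hs : ∀ g ∉ s, μ g = 0) (hμ0 : ∀ g, 0 ≤ μ g)
    (hμs : ∑ y ∈ s, μ y = 1) (n : ℕ) :
    lqNorm q (nuC H μ n) ≤ 1 := by
  have hq0 : 0 < q := lt_of_lt_of_le zero_lt_one hq
  rw [lqNorm_nuC_eq H hq0 hs hμ0 n]
  calc ENNReal.ofReal (∑ x ∈ (tpow s n).image (fun g => (QuotientGroup.mk g : G ⧸ H)),
          walkDist H μ n x ^ q) ^ (1/q)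
      ≤ ENNReal.ofReal 1 ^ (1/q) :=
        ENNReal.rpow_le_rpow (ENNReal.ofReal_le_ofReal (Sq_le_one H hq hs hμ0 hμs n))
          (by positivity)
    _ = 1 := by rw [ENNReal.ofReal_one, ENNReal.one_rpow]

lemma lqNorm_nuC_pos (hq0 : 0 < q) (hs : ∀ g ∉ s, μ g = 0) (hμ0 : ∀ g, 0 ≤ μ g)
    (hμs : ∑ y ∈ s, μ y = 1) (n : ℕ) :
    0 < lqNorm q (nuC H μ n) := by
  rw [lqNorm_nuC_eq H hq0 hs hμ0 n]
  refine ENNReal.rpow_pos ?_ (by simp)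
  exact ENNReal.ofReal_pos.2 (Sq_pos H hs hμ0 hμs n)

lemma opNorm_iter_ge (hq : 1 ≤ q) (hs : ∀ g ∉ s, μ g = 0) (hμ0 : ∀ g, 0 ≤ μ g)
    (hμs : ∑ y ∈ s, μ y = 1) (m : ℕ) :
    lqNorm q (nuC H μ m) ≤ opNorm q ((lam H (fun g => (μ g : ℂ)))^[m]) := by
  rw [← lam_iter H hs m]
  exact le_opNorm _ _ (lqNorm_nuC_le_one H hq hs hμ0 hμs 0)

lemma opNorm_iter_toReal_pos (hq : 1 ≤ q) (hs : ∀ g ∉ s, μ g = 0) (hμ0 : ∀ g, 0 ≤ μ g)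
    (hμs : ∑ y ∈ s, μ y = 1) (m : ℕ) :
    0 < (opNorm q ((lam H (fun g => (μ g : ℂ)))^[m])).toReal := by
  have hq0 : 0 < q := lt_of_lt_of_le zero_lt_one hq
  refine ENNReal.toReal_pos ?_ ?_
  · intro h
    have := lt_of_lt_of_le (lqNorm_nuC_pos H hq0 hs hμ0 hμs m)
      (opNorm_iter_ge H hq hs hμ0 hμs m)
    rw [h] at this
    exact lt_irrefl _ this
  · exact ne_top_of_le_ne_top (by simp) (opNorm_iter_le_one H hq hs hμ0 hμs m)

lemma opNorm_iter_toReal_le_one (hq : 1 ≤ q) (hs : ∀ g ∉ s, μ g = 0) (hμ0 : ∀ g, 0 ≤ μ g)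
    (hμs : ∑ y ∈ s, μ y = 1) (m : ℕ) :
    (opNorm q ((lam H (fun g => (μ g : ℂ)))^[m])).toReal ≤ 1 := by
  have h := opNorm_iter_le_one H hq hs hμ0 hμs m
  calc (opNorm q ((lam H (fun g => (μ g : ℂ)))^[m])).toReal ≤ (1 : ℝ≥0∞).toReal :=
      ENNReal.toReal_mono (by simp) h
    _ = 1 := by simp

lemma Sq_le_opNorm_pow (hq : 1 ≤ q) (hs : ∀ g ∉ s, μ g = 0) (hμ0 : ∀ g, 0 ≤ μ g)
    (hμs : ∑ y ∈ s, μ y = 1) (m : ℕ) :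
    ∑ x ∈ (tpow s m).image (fun g => (QuotientGroup.mk g : G ⧸ H)),
        walkDist H μ m x ^ q
      ≤ (opNorm q ((lam H (fun g => (μ g : ℂ)))^[m])).toReal ^ q := by
  have hq0 : 0 < q := lt_of_lt_of_le zero_lt_one hq
  set a := opNorm q ((lam H (fun g => (μ g : ℂ)))^[m]) with ha
  have hane : a ≠ ⊤ := ne_top_of_le_ne_top (by simp) (opNorm_iter_le_one H hq hs hμ0 hμs m)
  have h1 : lqNorm q (nuC H μ m) ≤ a := opNorm_iter_ge H hq hs hμ0 hμs m
  rw [lqNorm_nuC_eq H hq0 hs hμ0 m] at h1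
  have h2 : ENNReal.ofReal (∑ x ∈ (tpow s m).image (fun g => (QuotientGroup.mk g : G ⧸ H)),
      walkDist H μ m x ^ q) ≤ a ^ q := by
    calc ENNReal.ofReal (∑ x ∈ (tpow s m).image (fun g => (QuotientGroup.mk g : G ⧸ H)),
          walkDist H μ m x ^ q)
        = (ENNReal.ofReal (∑ x ∈ (tpow s m).image (fun g => (QuotientGroup.mk g : G ⧸ H)),
            walkDist H μ m x ^ q) ^ (1/q)) ^ q := by
          rw [← ENNReal.rpow_mul, one_div, inv_mul_cancel₀ hq0.ne', ENNReal.rpow_one]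
      _ ≤ a ^ q := ENNReal.rpow_le_rpow h1 hq0.le
  calc ∑ x ∈ (tpow s m).image (fun g => (QuotientGroup.mk g : G ⧸ H)), walkDist H μ m x ^ q
      = (ENNReal.ofReal (∑ x ∈ (tpow s m).image (fun g => (QuotientGroup.mk g : G ⧸ H)),
          walkDist H μ m x ^ q)).toReal := by
        rw [ENNReal.toReal_ofReal
          (Finset.sum_nonneg fun x _ => Real.rpow_nonneg (walk_nonneg H hμ0 m x) q)]
    _ ≤ (a ^ q).toReal := ENNReal.toReal_mono (by
        exact ENNReal.rpow_ne_top_of_nonneg hq0.le hane) h2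
    _ = a.toReal ^ q := by rw [ENNReal.toReal_rpow]

lemma shannon_key (hq : 1 < q) (hs : ∀ g ∉ s, μ g = 0) (hμ0 : ∀ g, 0 ≤ μ g)
    (hμs : ∑ y ∈ s, μ y = 1) (m : ℕ) :
    (q/(1-q)) * Real.log ((opNorm q ((lam H (fun g => (μ g : ℂ)))^[m])).toReal)
      ≤ shannon (walkDist H μ m) := by
  have hq0 : 0 < q := lt_trans zero_lt_one hq
  set a := (opNorm q ((lam H (fun g => (μ g : ℂ)))^[m])).toReal with ha
  have hapos : 0 < a := opNorm_iter_toReal_pos H hq.le hs hμ0 hμs m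
  set Sq := ∑ x ∈ (tpow s m).image (fun g => (QuotientGroup.mk g : G ⧸ H)),
      walkDist H μ m x ^ q with hSq
  have hSqpos : 0 < Sq := Sq_pos H hs hμ0 hμs m
  have hle : Sq ≤ a ^ q := Sq_le_opNorm_pow H hq.le hs hμ0 hμs m
  have hlog : Real.log Sq ≤ q * Real.log a := by
    rw [← Real.log_rpow hapos]
    exact Real.log_le_log hSqpos hle
  have hneg : (1/(1-q)) ≤ 0 := by
    apply div_nonpos_of_nonneg_of_nonpos <;> linarith
  have h1 := mul_le_mul_of_nonpos_left hlog hneg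
  have h2 : (1/(1-q)) * (q * Real.log a) = (q/(1-q)) * Real.log a := by ring
  rw [h2] at h1
  refine le_trans h1 ?_
  refine renyi_le_shannon hq (walkDist H μ m) _ (walk_nonneg H hμ0 m)
    (fun x hx => walk_supp H hs m x hx) (walk_sum_one H hs hμs m)

end Chain


section UpperEnt

attribute [local instance] Classical.propDecidable

lemma shannon_le_log_card {Xt : Type*} (ν : Xt → ℝ) (F : Finset Xt)
    (hnn : ∀ x, 0 ≤ ν x) (hoff : ∀ x ∉ F, ν x = 0) (hsum1 : ∑ x ∈ F, ν x = 1) :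
    shannon ν ≤ Real.log F.card := by
  have hsh : shannon ν = -∑ x ∈ F, ν x * Real.log (ν x) := by
    rw [shannon, tsum_eq_sum (s := F) (fun x hx => by rw [hoff x hx, zero_mul])]
  set F' := F.filter (fun x => ν x ≠ 0) with hF'
  have hsub : F' ⊆ F := Finset.filter_subset _ _
  have hpos : ∀ x ∈ F', 0 < ν x := fun x hx =>
    lt_of_le_of_ne (hnn x) (Ne.symm (Finset.mem_filter.1 hx).2)
  have hvanish : ∀ x ∈ F, x ∉ F' → ν x = 0 := fun x hxF hxF' => by
    by_contra h
    exact hxF' (Finset.mem_filter.2 ⟨hxF, h⟩)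
  have hsum1' : ∑ x ∈ F', ν x = 1 := by
    rw [Finset.sum_subset hsub hvanish, hsum1]
  have hE : ∑ x ∈ F', ν x * Real.log (ν x) = ∑ x ∈ F, ν x * Real.log (ν x) :=
    Finset.sum_subset hsub (fun x hxF hxF' => by rw [hvanish x hxF hxF', zero_mul])
  have jensen := (strictConcaveOn_log_Ioi.concaveOn).le_map_sum (t := F')
    (w := fun x => ν x) (p := fun x => (ν x)⁻¹)
    (fun x _ => hnn x) hsum1' (fun x hx => inv_pos.2 (hpos x hx))
  have hL : ∑ x ∈ F', ν x • Real.log ((ν x)⁻¹) = -∑ x ∈ F', ν x * Real.log (ν x) := by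
    rw [← Finset.sum_neg_distrib]
    refine Finset.sum_congr rfl fun x hx => ?_
    rw [smul_eq_mul, Real.log_inv]
    ring
  have hRR : ∑ x ∈ F', ν x • (ν x)⁻¹ = (F'.card : ℝ) := by
    rw [Finset.sum_congr rfl (fun x hx => by
      rw [smul_eq_mul, mul_inv_cancel₀ (hpos x hx).ne'])]
    simp
  rw [hL, hRR] at jensen
  have hcard0 : 0 < F'.card := by
    rcases Finset.eq_empty_or_nonempty F' with h | h
    · exfalso
      rw [h, Finset.sum_empty] at hsum1'
      norm_num at hsum1'
    · exact Finset.card_pos.2 h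
  calc shannon ν = -∑ x ∈ F', ν x * Real.log (ν x) := by rw [hsh, hE]
    _ ≤ Real.log F'.card := jensen
    _ ≤ Real.log F.card := Real.log_le_log (by exact_mod_cast hcard0)
        (by exact_mod_cast Finset.card_le_card hsub)

end UpperEnt

section Cards

attribute [local instance] Classical.propDecidable

variable {s : Finset G}

lemma tpow_card (m : ℕ) : (tpow s m).card ≤ s.card ^ m := by
  induction m with
  | zero => simp [tpow]
  | succ m ih =>
    calc (tpow s (m+1)).card = (s * tpow s m).card := rfl
      _ ≤ s.card * (tpow s m).card := Finset.card_mul_le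
      _ ≤ s.card * s.card ^ m := Nat.mul_le_mul_left _ ih
      _ = s.card ^ (m+1) := by ring

lemma tpow_nonempty (hsne : s.Nonempty) (m : ℕ) : (tpow s m).Nonempty := by
  induction m with
  | zero => exact ⟨1, by simp [tpow]⟩
  | succ m ih => exact Finset.Nonempty.mul hsne ih

end Cards


end PaperRD

/-- For a countable discrete group `G`, a subgroup `H ≤ G`, and a
finitely supported probability measure `μ` on `G`, the lower asymptotic entropy of the
random walk on `G ⧸ H` dominates `c(G,H;μ)`:
`liminf_n H(ν_n)/n ≥ c(G,H;μ)`. -/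
theorem statement2 {G : Type*} [Group G] [Countable G] (H : Subgroup G)
    (μ : G → ℝ) (hμ0 : ∀ g, 0 ≤ μ g) (hμ1 : HasSum μ 1)
    (hfin : (Function.support μ).Finite) :
    PaperRD.cval H μ ≤
      Filter.atTop.liminf
        (fun n : ℕ => PaperRD.shannon (PaperRD.walkDist H μ n) / (n : ℝ)) := by
  classical
  set L := Filter.atTop.liminf
    (fun n : ℕ => PaperRD.shannon (PaperRD.walkDist H μ n) / (n : ℝ)) with hLdef
  set s : Finset G := hfin.toFinset with hsdef
  have hs : ∀ g ∉ s, μ g = 0 := by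
    intro g hg
    by_contra h
    exact hg (hfin.mem_toFinset.2 h)
  have hμs : ∑ y ∈ s, μ y = 1 := by
    have h1 : ∑' g, μ g = ∑ g ∈ s, μ g := tsum_eq_sum hs
    rw [← h1, hμ1.tsum_eq]
  -- the sequence of entropies
  set g : ℕ → ℝ := fun n => PaperRD.shannon (PaperRD.walkDist H μ n) / (n : ℝ) with hgdef
  have hsne : s.Nonempty := by
    rcases Finset.eq_empty_or_nonempty s with h | h
    · exfalso
      rw [h, Finset.sum_empty] at hμs
      norm_num at hμs
    · exact h
  -- shannon nonneg
  have hshannon_nonneg : ∀ n : ℕ, 0 ≤ PaperRD.shannon (PaperRD.walkDist H μ n) := by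
    intro n
    rw [PaperRD.shannon, neg_nonneg, tsum_eq_sum
      (s := (PaperRD.tpow s n).image (fun g' => (QuotientGroup.mk g' : G ⧸ H)))
      (fun x hx => by rw [PaperRD.walk_supp H hs n x hx, zero_mul])]
    refine Finset.sum_nonpos fun x _ => ?_
    exact mul_nonpos_of_nonneg_of_nonpos (PaperRD.walk_nonneg H hμ0 n x)
      (Real.log_nonpos (PaperRD.walk_nonneg H hμ0 n x) (PaperRD.walk_le_one H hs hμ0 hμs n x))
  have hg0 : ∀ n : ℕ, 0 ≤ g n := fun n => div_nonneg (hshannon_nonneg n) (Nat.cast_nonneg n)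
  -- shannon bounded above linearly
  set B : ℝ := max (Real.log s.card) 0 with hBdef
  have hgB : ∀ n : ℕ, g n ≤ B := by
    intro n
    rcases Nat.eq_zero_or_pos n with h0 | hpos
    · rw [hgdef]
      simp only [h0, Nat.cast_zero, div_zero]
      exact le_max_right _ _
    · have hcard : ((PaperRD.tpow s n).image (fun g' => (QuotientGroup.mk g' : G ⧸ H))).card
          ≤ s.card ^ n :=
        le_trans Finset.card_image_le (PaperRD.tpow_card n)
      have hXpos : 0 < ((PaperRD.tpow s n).image
          (fun g' => (QuotientGroup.mk g' : G ⧸ H))).card :=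
        Finset.card_pos.2 ((PaperRD.tpow_nonempty hsne n).image _)
      have hsh_le : PaperRD.shannon (PaperRD.walkDist H μ n) ≤ (n : ℝ) * Real.log s.card := by
        calc PaperRD.shannon (PaperRD.walkDist H μ n)
            ≤ Real.log ((PaperRD.tpow s n).image
                (fun g' => (QuotientGroup.mk g' : G ⧸ H))).card :=
              PaperRD.shannon_le_log_card _ _ (PaperRD.walk_nonneg H hμ0 n)
                (fun x hx => PaperRD.walk_supp H hs n x hx) (PaperRD.walk_sum_one H hs hμs n)
          _ ≤ Real.log ((s.card : ℝ) ^ n) := by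
              refine Real.log_le_log (by exact_mod_cast hXpos) ?_
              exact_mod_cast hcard
          _ = (n : ℝ) * Real.log s.card := by rw [Real.log_pow]
      rw [hgdef]
      rw [div_le_iff₀ (by exact_mod_cast hpos)]
      calc PaperRD.shannon (PaperRD.walkDist H μ n) ≤ (n : ℝ) * Real.log s.card := hsh_le
        _ ≤ (n : ℝ) * B := by
            refine mul_le_mul_of_nonneg_left (le_max_left _ _) (Nat.cast_nonneg n)
        _ = B * (n : ℝ) := mul_comm _ _
  have hcob : Filter.atTop.IsCoboundedUnder (· ≥ ·) g :=
    Filter.isCoboundedUnder_ge_of_le Filter.atTop hgB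
  have hL0 : 0 ≤ L :=
    Filter.le_liminf_of_le hcob (Filter.Eventually.of_forall hg0)
  refine Real.sSup_le ?_ hL0
  rintro y ⟨p, hp2, rfl⟩
  have hp1 : 1 < p := lt_of_lt_of_le one_lt_two hp2
  have hp1' : (0:ℝ) < p - 1 := by linarith
  set q : ℝ := p / (p - 1) with hqdef
  have hq1 : 1 < q := (one_lt_div hp1').2 (by linarith)
  have hq0 : 0 < q := lt_trans zero_lt_one hq1
  have hpq : q / (1 - q) = -p := by
    rw [hqdef]
    field_simp
    ring
  set T := PaperRD.lam H (fun g' => (μ g' : ℂ)) with hT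
  set u : ℕ → ℝ := fun m => Real.log ((PaperRD.opNorm q (T^[m])).toReal) with hu
  have hapos : ∀ m, 0 < (PaperRD.opNorm q (T^[m])).toReal := fun m =>
    PaperRD.opNorm_iter_toReal_pos H hq1.le hs hμ0 hμs m
  have hane : ∀ m, PaperRD.opNorm q (T^[m]) ≠ ⊤ := fun m =>
    ne_top_of_le_ne_top (by simp) (PaperRD.opNorm_iter_le_one H hq1.le hs hμ0 hμs m)
  have hsubadd : Subadditive u := by
    intro m n
    have hmul := PaperRD.opNorm_submul H hq1.le hs hμ0 hμs m n
    have h1 : (PaperRD.opNorm q (T^[m + n])).toReal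
        ≤ (PaperRD.opNorm q (T^[m])).toReal * (PaperRD.opNorm q (T^[n])).toReal := by
      calc (PaperRD.opNorm q (T^[m + n])).toReal
          ≤ (PaperRD.opNorm q (T^[m]) * PaperRD.opNorm q (T^[n])).toReal :=
            ENNReal.toReal_mono (ENNReal.mul_ne_top (hane m) (hane n)) hmul
        _ = _ := ENNReal.toReal_mul
    calc u (m + n) ≤ Real.log ((PaperRD.opNorm q (T^[m])).toReal
          * (PaperRD.opNorm q (T^[n])).toReal) :=
          Real.log_le_log (hapos (m + n)) h1
      _ = u m + u n := Real.log_mul (hapos m).ne' (hapos n).ne'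
  have hkey : ∀ m : ℕ, -p * u m ≤ PaperRD.shannon (PaperRD.walkDist H μ m) := by
    intro m
    have h1 := PaperRD.shannon_key H hq1 hs hμ0 hμs m
    rw [hpq] at h1
    exact h1
  -- the spectral radius
  set R : ℝ≥0∞ := ⨅ n : ℕ, PaperRD.opNorm q (T^[n + 1]) ^ (1 / (n + 1 : ℝ)) with hRdef
  have hspec : PaperRD.specRad H μ q = R.toReal := rfl
  rw [hspec]
  set r : ℝ := R.toReal with hrdef
  rcases eq_or_ne r 0 with hr0 | hr0
  · rw [hr0, Real.log_zero, mul_zero]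
    exact hL0
  have hrpos : 0 < r := lt_of_le_of_ne ENNReal.toReal_nonneg (Ne.symm hr0)
  have hRne : R ≠ ⊤ := by
    intro h
    rw [hrdef, h] at hr0
    simp at hr0
  have hRle : ∀ n : ℕ, R ≤ PaperRD.opNorm q (T^[n + 1]) ^ (1 / (n + 1 : ℝ)) := fun n =>
    iInf_le _ n
  have hr1 : r ≤ 1 := by
    have h1 : R ≤ 1 := by
      refine le_trans (hRle 0) ?_
      have : (1 / ((0:ℕ) + 1 : ℝ)) = 1 := by norm_num
      rw [this, ENNReal.rpow_one]
      exact PaperRD.opNorm_iter_le_one H hq1.le hs hμ0 hμs 1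
    calc r ≤ (1 : ℝ≥0∞).toReal := ENNReal.toReal_mono (by simp) h1
      _ = 1 := by simp
  -- lower bound for Fekete
  have hlb : ∀ m : ℕ, Real.log r ≤ u m / m := by
    intro m
    rcases Nat.eq_zero_or_pos m with h0 | hpos
    · rw [h0]
      simp only [Nat.cast_zero, div_zero]
      exact Real.log_nonpos hrpos.le hr1
    · obtain ⟨n, rfl⟩ : ∃ n, m = n + 1 := ⟨m - 1, by omega⟩
      have hRpow : R ^ ((n:ℝ) + 1) ≤ PaperRD.opNorm q (T^[n + 1]) := by
        calc R ^ ((n:ℝ) + 1)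
            ≤ (PaperRD.opNorm q (T^[n + 1]) ^ (1 / (n + 1 : ℝ))) ^ ((n:ℝ) + 1) :=
              ENNReal.rpow_le_rpow (hRle n) (by positivity)
          _ = PaperRD.opNorm q (T^[n + 1]) := by
              rw [← ENNReal.rpow_mul, one_div, inv_mul_cancel₀ (by positivity : ((n:ℝ)+1) ≠ 0),
                ENNReal.rpow_one]
      have htoReal : r ^ ((n:ℝ) + 1) ≤ (PaperRD.opNorm q (T^[n + 1])).toReal := by
        calc r ^ ((n:ℝ) + 1) = (R ^ ((n:ℝ) + 1)).toReal := ENNReal.toReal_rpow R _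
          _ ≤ _ := ENNReal.toReal_mono (hane (n + 1)) hRpow
      have hlog : ((n:ℝ) + 1) * Real.log r ≤ u (n + 1) := by
        rw [← Real.log_rpow hrpos]
        exact Real.log_le_log (Real.rpow_pos_of_pos hrpos _) htoReal
      rw [le_div_iff₀ (by exact_mod_cast hpos)]
      calc Real.log r * ((n + 1 : ℕ):ℝ) = ((n:ℝ) + 1) * Real.log r := by
            push_cast
            ring
        _ ≤ u (n + 1) := hlog
  have hbdd : BddBelow (Set.range fun m : ℕ => u m / m) := by
    refine ⟨Real.log r, ?_⟩
    rintro _ ⟨m, rfl⟩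
    exact hlb m
  have htendsto := hsubadd.tendsto_lim hbdd
  -- L ≥ -p * lim
  have ht2 : Filter.Tendsto (fun m : ℕ => -p * (u m / m)) Filter.atTop
      (nhds (-p * hsubadd.lim)) := htendsto.const_mul _
  have hptwise : ∀ m : ℕ, -p * (u m / m) ≤ g m := by
    intro m
    rcases Nat.eq_zero_or_pos m with h0 | hpos
    · rw [h0]
      simp [hgdef]
    · rw [hgdef, mul_div_assoc']
      exact (div_le_div_iff_of_pos_right (by exact_mod_cast hpos)).2 (hkey m)
  have hliminf_le : -p * hsubadd.lim ≤ L := by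
    have h1 : Filter.atTop.liminf (fun m : ℕ => -p * (u m / m)) ≤ L :=
      Filter.liminf_le_liminf (Filter.Eventually.of_forall hptwise)
        ht2.isBoundedUnder_ge hcob
    rwa [ht2.liminf_eq] at h1
  have hlim_le : hsubadd.lim ≤ Real.log r := by
    have key : ∀ δ : ℝ, 0 < δ → hsubadd.lim ≤ Real.log (r + δ) := by
      intro δ hδ
      have hlt : R < ENNReal.ofReal (r + δ) := by
        rw [show R = ENNReal.ofReal r from (ENNReal.ofReal_toReal hRne).symm]
        exact (ENNReal.ofReal_lt_ofReal_iff (by linarith)).2 (by linarith)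
      rw [hRdef] at hlt
      obtain ⟨n, hn⟩ := iInf_lt_iff.1 hlt
      have htR : (PaperRD.opNorm q (T^[n+1]) ^ (1 / (n + 1 : ℝ))).toReal ≤ r + δ :=
        ENNReal.toReal_le_of_le_ofReal (by linarith) hn.le
      have hthis_pos : 0 < (PaperRD.opNorm q (T^[n+1]) ^ (1 / (n + 1 : ℝ))).toReal := by
        rw [← ENNReal.toReal_rpow]
        exact Real.rpow_pos_of_pos (hapos (n+1)) _
      have h3 := hsubadd.lim_le_div hbdd (n := n + 1) (by omega)
      have h4 : u (n+1) / ((n+1 : ℕ):ℝ)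
          = Real.log ((PaperRD.opNorm q (T^[n+1]) ^ (1 / (n + 1 : ℝ))).toReal) := by
        rw [← ENNReal.toReal_rpow, Real.log_rpow (hapos (n+1)), hu]
        push_cast
        ring
      calc hsubadd.lim ≤ u (n+1) / ((n+1 : ℕ):ℝ) := h3
        _ = _ := h4
        _ ≤ Real.log (r + δ) := Real.log_le_log hthis_pos htR
    have hexp : ∀ δ : ℝ, 0 < δ → Real.exp hsubadd.lim ≤ r + δ := by
      intro δ hδ
      calc Real.exp hsubadd.lim ≤ Real.exp (Real.log (r + δ)) :=
            Real.exp_le_exp.2 (key δ hδ)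
        _ = r + δ := Real.exp_log (by linarith)
    have h5 : Real.exp hsubadd.lim ≤ r := by
      by_contra h6
      push_neg at h6
      have := hexp ((Real.exp hsubadd.lim - r)/2) (by linarith)
      linarith
    calc hsubadd.lim = Real.log (Real.exp hsubadd.lim) := (Real.log_exp _).symm
      _ ≤ Real.log r := Real.log_le_log (Real.exp_pos _) h5
  have hfinal : -p * Real.log r ≤ -p * hsubadd.lim :=
    mul_le_mul_of_nonpos_left hlim_le (by linarith : (-p) ≤ 0)
  exact le_trans hfinal hliminf_le
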